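/- For every r ∈ ℕ there exists a constant c > 0 (depending only on r) with the following property. Let G = (V, E) be a finite simple graph of maximum degree at most r, and let (Γ_e)_{e ∈ E} be independent Exponential(1) random variables. Then for every integer m ≥ 1, the probability that G contains a self-avoiding path P with at least m edges such that ∑_{e ∈ P} Γ_e ≤ c·|P| (where |P| is the number of edges of P) is at most |V|·e^{−m}. -/

import Mathlib

open MeasureTheory ProbabilityTheory

namespace ExpSAW
open MeasureTheory ProbabilityTheory Real Set Finset

lemma lintegral_exp_expMeasure {t : ℝ} (ht : t ≤ 0) :
    ∫⁻ x, ENNReal.ofReal (rexp (t * x)) ∂(expMeasure 1) = ENNReal.ofReal (1 / (1 - t)) := by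
  have hb : 0 < 1 - t := by linarith
  have hmeas : Measurable fun x : ℝ => ENNReal.ofReal (rexp (t * x)) :=
    ((measurable_id'.const_mul t).exp).ennreal_ofReal
  have hpdf : Measurable (gammaPDF 1 1) := (measurable_gammaPDFReal 1 1).ennreal_ofReal
  rw [show expMeasure 1 = volume.withDensity (gammaPDF 1 1) from rfl,
    lintegral_withDensity_eq_lintegral_mul volume hpdf hmeas]
  have hfun : ∀ a : ℝ, (gammaPDF 1 1 * fun x => ENNReal.ofReal (rexp (t * x))) a
      = (Ici (0:ℝ)).indicator (fun x => ENNReal.ofReal (rexp (-(1 - t) * x))) a := by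
    intro a
    simp only [Pi.mul_apply]
    by_cases hx : (0:ℝ) ≤ a
    · rw [gammaPDF_of_nonneg hx, Set.indicator_of_mem (Set.mem_Ici.mpr hx),
        ← ENNReal.ofReal_mul (by positivity)]
      congr 1
      rw [Real.Gamma_one]
      norm_num
      rw [← Real.exp_add]
      ring_nf
    · rw [gammaPDF_of_neg (lt_of_not_ge hx), Set.indicator_of_notMem (fun h => hx (Set.mem_Ici.mp h)), zero_mul]
  rw [lintegral_congr hfun, lintegral_indicator measurableSet_Ici,
    ← Measure.restrict_congr_set Ioi_ae_eq_Ici,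
    ← ofReal_integral_eq_lintegral_ofReal (exp_neg_integrableOn_Ioi 0 hb)
      (ae_of_all _ fun x => (exp_pos _).le)]
  congr 1
  have h := integral_comp_mul_left_Ioi (fun x => rexp (-x)) 0 hb
  simp only [mul_zero, neg_mul] at h ⊢
  rw [h, integral_exp_neg_Ioi_zero, smul_eq_mul, mul_one, one_div]

lemma integrable_exp_expMeasure {t : ℝ} (ht : t ≤ 0) :
    Integrable (fun x => rexp (t * x)) (expMeasure 1) := by
  refine ⟨((measurable_id'.const_mul t).exp).aestronglyMeasurable, ?_⟩
  rw [hasFiniteIntegral_iff_ofReal (ae_of_all _ fun x => (exp_pos _).le),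
    lintegral_exp_expMeasure ht]
  exact ENNReal.ofReal_lt_top

lemma integral_exp_expMeasure {t : ℝ} (ht : t ≤ 0) :
    ∫ x, rexp (t * x) ∂(expMeasure 1) = 1 / (1 - t) := by
  have hb : 0 < 1 - t := by linarith
  rw [integral_eq_lintegral_of_nonneg_ae (ae_of_all _ fun x => (exp_pos _).le)
      ((measurable_id'.const_mul t).exp).aestronglyMeasurable,
    lintegral_exp_expMeasure ht, ENNReal.toReal_ofReal (by positivity)]


lemma chernoff_bound {V : Type} {G : SimpleGraph V}
    {Ω : Type} [MeasurableSpace Ω] {P : Measure Ω} [IsProbabilityMeasure P]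
    {Γ : Sym2 V → Ω → ℝ} (hmeas : ∀ e, Measurable (Γ e))
    (hindep : iIndepFun
      (fun e : G.edgeSet => Γ e) P)
    (hdist : ∀ e ∈ G.edgeSet, P.map (Γ e) = expMeasure 1)
    {L : ℝ} (hL : 0 < L) (s : Finset G.edgeSet) :
    P {ω | ∑ e ∈ s, Γ e ω ≤ L⁻¹ * s.card} ≤
      ENNReal.ofReal ((rexp 1 / (1 + L)) ^ s.card) := by
  have htneg : -L ≤ 0 := by linarith
  have hg : Measurable fun x : ℝ => rexp (-L * x) := (measurable_id'.const_mul _).exp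
  have hint : ∀ e : G.edgeSet, Integrable (fun ω => rexp (-L * Γ e ω)) P := by
    intro e
    have h1 : Integrable (fun x => rexp (-L * x)) (P.map (Γ (e : Sym2 V))) := by
      rw [hdist e e.2]; exact integrable_exp_expMeasure htneg
    exact (integrable_map_measure hg.aestronglyMeasurable (hmeas _).aemeasurable).mp h1
  have hmgf : ∀ e : G.edgeSet, mgf (Γ (e : Sym2 V)) P (-L) = 1 / (1 + L) := by
    intro e
    have h2 : mgf (Γ (e : Sym2 V)) P (-L) = ∫ x, rexp (-L * x) ∂(P.map (Γ (e : Sym2 V))) := by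
      rw [integral_map (hmeas _).aemeasurable hg.aestronglyMeasurable]
      rfl
    rw [h2, hdist e e.2, integral_exp_expMeasure htneg, sub_neg_eq_add]
  set X : G.edgeSet → Ω → ℝ := fun e => Γ e with hX
  have hset : {ω | ∑ e ∈ s, Γ e ω ≤ L⁻¹ * s.card}
      = {ω | (∑ e ∈ s, X e) ω ≤ L⁻¹ * s.card} := by
    ext ω; simp [Finset.sum_apply, hX]
  rw [hset]
  have hIntS : Integrable (fun ω => rexp (-L * (∑ e ∈ s, X e) ω)) P :=
    hindep.integrable_exp_mul_sum (fun e => hmeas _) (fun e _ => hint e)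
  have hch := measure_le_le_exp_mul_mgf (μ := P) (X := ∑ e ∈ s, X e)
    (L⁻¹ * s.card) htneg hIntS
  rw [hindep.mgf_sum (fun e => hmeas _) s] at hch
  have hprod : ∏ e ∈ s, mgf (X e) P (-L) = (1 / (1 + L)) ^ s.card := by
    rw [Finset.prod_congr rfl fun e _ => hmgf e, Finset.prod_const]
  rw [hprod] at hch
  have hεeq : rexp (-(-L) * (L⁻¹ * s.card)) = rexp 1 ^ s.card := by
    rw [neg_neg]
    have h3 : L * (L⁻¹ * (s.card : ℝ)) = (s.card : ℝ) * 1 := by field_simp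
    rw [h3, Real.exp_nat_mul]
  rw [hεeq] at hch
  have hfin : P {ω | (∑ e ∈ s, X e) ω ≤ L⁻¹ * s.card} ≠ ⊤ := measure_ne_top _ _
  rw [← ENNReal.ofReal_toReal hfin]
  apply ENNReal.ofReal_le_ofReal
  calc (P {ω | (∑ e ∈ s, X e) ω ≤ L⁻¹ * s.card}).toReal
      ≤ rexp 1 ^ s.card * (1 / (1 + L)) ^ s.card := hch
    _ = (rexp 1 / (1 + L)) ^ s.card := by rw [← mul_pow, mul_one_div]

lemma geom_tail_le {a : ℝ} (h0 : 0 ≤ a) (ha : a ≤ rexp (-2)) {m N : ℕ} (hm : 1 ≤ m) :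
    ∑ n ∈ Finset.Icc m N, a ^ n ≤ rexp (-(m : ℝ)) := by
  have h2 : (2 : ℝ) ≤ rexp 1 := by
    have := Real.add_one_le_exp (1 : ℝ); linarith
  have hq1pos : 0 < rexp (-1) := exp_pos _
  have hq1mul : rexp (-1) * rexp 1 = 1 := by rw [← Real.exp_add]; norm_num
  have hq1half : rexp (-1) ≤ 1 / 2 := by nlinarith
  have ha2 : rexp (-2) = rexp (-1) * rexp (-1) := by rw [← Real.exp_add]; norm_num
  have ha1 : a < 1 := by nlinarith
  have h1a : 0 < 1 - a := by linarith
  have hmexp : rexp (-(m : ℝ)) = rexp (-1) ^ m := by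
    rw [show -(m : ℝ) = (m : ℝ) * (-1) by ring, Real.exp_nat_mul]
  have hpow1 : rexp (-1) ^ m ≤ rexp (-1) := by
    calc rexp (-1) ^ m ≤ rexp (-1) ^ 1 :=
      pow_le_pow_of_le_one hq1pos.le (by linarith) hm
    _ = rexp (-1) := pow_one _
  calc ∑ n ∈ Finset.Icc m N, a ^ n
      = ∑ k ∈ Finset.range (N + 1 - m), a ^ (m + k) := by
        rw [← Finset.Ico_add_one_right_eq_Icc, Finset.sum_Ico_eq_sum_range]
    _ = a ^ m * ∑ k ∈ Finset.range (N + 1 - m), a ^ k := by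
        simp_rw [pow_add]; rw [← Finset.mul_sum]
    _ ≤ a ^ m * (1 - a)⁻¹ := by
        refine mul_le_mul_of_nonneg_left ?_ (pow_nonneg h0 m)
        refine le_trans (Summable.sum_le_tsum _ (fun i _ => pow_nonneg h0 i)
          (summable_geometric_of_lt_one h0 ha1)) ?_
        rw [tsum_geometric_of_lt_one h0 ha1]
    _ ≤ rexp (-1) ^ m := by
        have hinv : (1 - a)⁻¹ ≤ 2 := by
          rw [show (2 : ℝ) = ((1:ℝ)/2)⁻¹ by norm_num]
          refine inv_anti₀ (by norm_num) (by nlinarith)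
        have hap : a ^ m ≤ rexp (-1) ^ m * rexp (-1) := by
          calc a ^ m ≤ rexp (-2) ^ m := pow_le_pow_left₀ h0 ha m
            _ = rexp (-1) ^ m * rexp (-1) ^ m := by rw [ha2, mul_pow]
            _ ≤ rexp (-1) ^ m * rexp (-1) :=
                mul_le_mul_of_nonneg_left hpow1 (pow_nonneg hq1pos.le m)
        calc a ^ m * (1 - a)⁻¹ ≤ (rexp (-1) ^ m * rexp (-1)) * 2 := by
              refine mul_le_mul hap hinv (by positivity) (by positivity)
          _ ≤ rexp (-1) ^ m := by nlinarith [pow_nonneg hq1pos.le m]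
    _ = rexp (-(m : ℝ)) := hmexp.symm



lemma count_walks {V : Type} [Fintype V] [DecidableEq V] (G : SimpleGraph V)
    [DecidableRel G.Adj] {r : ℕ} (hdeg : ∀ v, G.degree v ≤ r) :
    ∀ (n : ℕ) (x : V), ∑ y : V, (G.finsetWalkLength n x y).card ≤ r ^ n := by
  intro n
  induction n with
  | zero =>
    intro x
    have h : ∀ y : V, (G.finsetWalkLength 0 x y).card = if y = x then 1 else 0 := by
      intro y
      by_cases h : y = x
      · subst h
        have h1 : G.finsetWalkLength 0 y y = {SimpleGraph.Walk.nil} := by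
          ext p
          simp [SimpleGraph.mem_finsetWalkLength_iff, SimpleGraph.Walk.length_eq_zero_iff]
        simp [h1]
      · have h1 : G.finsetWalkLength 0 x y = ∅ := by
          ext p
          simp only [SimpleGraph.mem_finsetWalkLength_iff, Finset.notMem_empty, iff_false]
          intro hl
          exact h (p.eq_of_length_eq_zero hl).symm
        simp [h1, h]
    simp [h]
  | succ n ih =>
    intro x
    have hstep : ∀ y, (G.finsetWalkLength (n+1) x y).card ≤
        ∑ w : G.neighborSet x, (G.finsetWalkLength n w y).card := by
      intro y
      have h1 : G.finsetWalkLength (n+1) x y =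
          Finset.univ.biUnion fun (w : G.neighborSet x) =>
            (G.finsetWalkLength n w y).map
              ⟨fun p => SimpleGraph.Walk.cons w.property p, fun _ _ h => by cases h; rfl⟩ := rfl
      rw [h1]
      refine le_trans (Finset.card_biUnion_le) ?_
      simp [Finset.card_map]
    calc ∑ y : V, (G.finsetWalkLength (n+1) x y).card
        ≤ ∑ y : V, ∑ w : G.neighborSet x, (G.finsetWalkLength n w y).card :=
          Finset.sum_le_sum fun y _ => hstep y
      _ = ∑ w : G.neighborSet x, ∑ y : V, (G.finsetWalkLength n (w : V) y).card :=
          Finset.sum_comm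
      _ ≤ ∑ _w : G.neighborSet x, r ^ n := Finset.sum_le_sum fun w _ => ih w
      _ = G.degree x * r ^ n := by
          rw [Finset.sum_const, smul_eq_mul, Finset.card_univ,
            SimpleGraph.card_neighborSet_eq_degree]
      _ ≤ r * r ^ n := Nat.mul_le_mul_right _ (hdeg x)
      _ = r ^ (n + 1) := (pow_succ' r n).symm


end ExpSAW

/-- For every `r` there is a constant `c > 0` such that for every finite simple graph `G`
with maximum degree at most `r` and i.i.d. Exponential(1) edge weights `Γ`, the probability
that `G` contains a self-avoiding path `P` with at least `m` edges and total weight at most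
`c·|P|` is at most `|V|·e^{-m}`. -/
theorem exponential_weight_self_avoiding_path_bound :
    ∀ r : ℕ, ∃ c : ℝ, 0 < c ∧
      ∀ (V : Type) [Fintype V] (G : SimpleGraph V) [DecidableRel G.Adj],
        (∀ v : V, G.degree v ≤ r) →
        ∀ (Ω : Type) [MeasurableSpace Ω] (P : Measure Ω) [IsProbabilityMeasure P]
          (Γ : Sym2 V → Ω → ℝ),
          (∀ e : Sym2 V, Measurable (Γ e)) →
          iIndepFun
            (fun e : G.edgeSet => Γ e) P →
          (∀ e ∈ G.edgeSet, P.map (Γ e) = expMeasure 1) →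
          ∀ m : ℕ, 1 ≤ m →
            P {ω | ∃ (x y : V) (p : G.Walk x y), p.IsPath ∧ m ≤ p.length ∧
                (p.edges.map fun e => Γ e ω).sum ≤ c * p.length} ≤
              ENNReal.ofReal ((Fintype.card V : ℝ) * Real.exp (-(m : ℝ))) := by
  intro r
  refine ⟨(((r : ℝ) + 1) * Real.exp 3)⁻¹, by positivity, ?_⟩
  intro V _ G _ hdeg Ω _ P _ Γ hmeas hindep hdist m hm
  classical
  set L : ℝ := ((r : ℝ) + 1) * Real.exp 3 with hLdef
  have hL : 0 < L := by positivity
  set N := Fintype.card V with hN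
  set q : ℝ := Real.exp 1 / (1 + L) with hqdef
  have hq0 : 0 ≤ q := by positivity
  -- per-path probability bound
  have hpath : ∀ (x y : V) (n : ℕ) (p : G.Walk x y), p.IsPath → p.length = n →
      P {ω | (p.edges.map fun e => Γ e ω).sum ≤ L⁻¹ * n} ≤
        ENNReal.ofReal (q ^ n) := by
    intro x y n p hp hlen
    set l : List G.edgeSet := p.edges.attachWith (· ∈ G.edgeSet)
      (fun e he => p.edges_subset_edgeSet he) with hl
    have hmap : l.map Subtype.val = p.edges := by
      rw [hl]
      have := List.attachWith_map_val (p := (· ∈ G.edgeSet)) (f := id) (l := p.edges)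
        (fun e he => p.edges_subset_edgeSet he)
      simpa using this
    have hnodup : l.Nodup :=
      List.Nodup.of_map Subtype.val (by rw [hmap]; exact hp.isTrail.edges_nodup)
    have hlen_l : l.length = n := by
      rw [← hlen, ← p.length_edges, ← hmap, List.length_map]
    set s : Finset G.edgeSet := l.toFinset with hs
    have hcard : s.card = n := by
      rw [hs, List.toFinset_card_of_nodup hnodup, hlen_l]
    have hsum : ∀ ω, ∑ e ∈ s, Γ e ω = (p.edges.map fun e => Γ e ω).sum := by
      intro ω
      rw [hs, List.sum_toFinset _ hnodup, ← hmap, List.map_map]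
      rfl
    have heq : {ω | (p.edges.map fun e => Γ e ω).sum ≤ L⁻¹ * n}
        = {ω | ∑ e ∈ s, Γ e ω ≤ L⁻¹ * s.card} := by
      ext ω
      rw [Set.mem_setOf_eq, Set.mem_setOf_eq, hsum ω, hcard]
    rw [heq]
    calc P {ω | ∑ e ∈ s, Γ e ω ≤ L⁻¹ * s.card}
        ≤ ENNReal.ofReal ((Real.exp 1 / (1 + L)) ^ s.card) :=
          ExpSAW.chernoff_bound hmeas hindep hdist hL s
      _ = ENNReal.ofReal (q ^ n) := by rw [hcard, hqdef]
  -- inclusion into a finite union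
  have hsub : {ω | ∃ (x y : V) (p : G.Walk x y), p.IsPath ∧ m ≤ p.length ∧
        (p.edges.map fun e => Γ e ω).sum ≤ L⁻¹ * p.length}
      ⊆ ⋃ x ∈ (Finset.univ : Finset V), ⋃ y ∈ (Finset.univ : Finset V),
          ⋃ n ∈ Finset.Icc m N,
            ⋃ p ∈ (G.finsetWalkLength n x y).filter (fun p => p.IsPath),
              {ω | (p.edges.map fun e => Γ e ω).sum ≤ L⁻¹ * n} := by
    intro ω hω
    obtain ⟨x, y, p, hp, hmlen, hsum⟩ := hω
    refine Set.mem_iUnion₂.mpr ⟨x, Finset.mem_univ x, Set.mem_iUnion₂.mpr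
      ⟨y, Finset.mem_univ y, Set.mem_iUnion₂.mpr ⟨p.length, ?_,
        Set.mem_iUnion₂.mpr ⟨p, ?_, hsum⟩⟩⟩⟩
    · exact Finset.mem_Icc.mpr ⟨hmlen, hp.length_lt.le⟩
    · exact Finset.mem_filter.mpr ⟨SimpleGraph.mem_finsetWalkLength_iff.mpr rfl, hp⟩
  refine le_trans (measure_mono hsub) ?_
  have hstep2 : P (⋃ x ∈ (Finset.univ : Finset V), ⋃ y ∈ (Finset.univ : Finset V),
      ⋃ n ∈ Finset.Icc m N, ⋃ p ∈ (G.finsetWalkLength n x y).filter (fun p => p.IsPath),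
        {ω | (p.edges.map fun e => Γ e ω).sum ≤ L⁻¹ * n})
      ≤ ∑ x : V, ∑ y : V, ∑ n ∈ Finset.Icc m N,
          ∑ p ∈ (G.finsetWalkLength n x y).filter (fun p => p.IsPath),
            P {ω | (p.edges.map fun e => Γ e ω).sum ≤ L⁻¹ * n} := by
    refine le_trans (measure_biUnion_finset_le _ _) (Finset.sum_le_sum fun x _ => ?_)
    refine le_trans (measure_biUnion_finset_le _ _) (Finset.sum_le_sum fun y _ => ?_)
    refine le_trans (measure_biUnion_finset_le _ _) (Finset.sum_le_sum fun n _ => ?_)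
    exact measure_biUnion_finset_le _ _
  refine le_trans hstep2 ?_
  have hstep3 : ∀ x y : V, ∀ n ∈ Finset.Icc m N,
      ∑ p ∈ (G.finsetWalkLength n x y).filter (fun p => p.IsPath),
          P {ω | (p.edges.map fun e => Γ e ω).sum ≤ L⁻¹ * n}
        ≤ ((G.finsetWalkLength n x y).card : ENNReal) * ENNReal.ofReal (q ^ n) := by
    intro x y n _
    calc ∑ p ∈ (G.finsetWalkLength n x y).filter (fun p => p.IsPath),
          P {ω | (p.edges.map fun e => Γ e ω).sum ≤ L⁻¹ * n}
        ≤ ∑ _p ∈ (G.finsetWalkLength n x y).filter (fun p => p.IsPath),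
            ENNReal.ofReal (q ^ n) := by
          refine Finset.sum_le_sum fun p hp => ?_
          have hp' := Finset.mem_filter.mp hp
          exact hpath x y n p hp'.2 (SimpleGraph.mem_finsetWalkLength_iff.mp hp'.1)
      _ = (((G.finsetWalkLength n x y).filter (fun p => p.IsPath)).card : ENNReal)
            * ENNReal.ofReal (q ^ n) := by
          rw [Finset.sum_const, nsmul_eq_mul]
      _ ≤ ((G.finsetWalkLength n x y).card : ENNReal) * ENNReal.ofReal (q ^ n) := by
          exact mul_le_mul_left (by exact_mod_cast Finset.card_filter_le _ _) _
  have hcount : ∀ (x : V) (n : ℕ),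
      ∑ y : V, ((G.finsetWalkLength n x y).card : ENNReal) ≤ ((r ^ n : ℕ) : ENNReal) := by
    intro x n
    rw [← Nat.cast_sum]
    exact_mod_cast ExpSAW.count_walks G hdeg n x
  have hgeom : ∑ n ∈ Finset.Icc m N, ((r : ℝ) * q) ^ n ≤ Real.exp (-(m : ℝ)) := by
    refine ExpSAW.geom_tail_le (by positivity) ?_ hm
    have h3 : Real.exp (-2) * Real.exp 3 = Real.exp 1 := by rw [← Real.exp_add]; norm_num
    rw [hqdef, hLdef]
    rw [mul_div_assoc', div_le_iff₀ (by positivity)]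
    nlinarith [Real.exp_pos (-2), Real.exp_pos (3:ℝ), Nat.cast_nonneg (α := ℝ) r]
  calc ∑ x : V, ∑ y : V, ∑ n ∈ Finset.Icc m N,
        ∑ p ∈ (G.finsetWalkLength n x y).filter (fun p => p.IsPath),
          P {ω | (p.edges.map fun e => Γ e ω).sum ≤ L⁻¹ * n}
      ≤ ∑ x : V, ∑ y : V, ∑ n ∈ Finset.Icc m N,
          ((G.finsetWalkLength n x y).card : ENNReal) * ENNReal.ofReal (q ^ n) :=
        Finset.sum_le_sum fun x _ => Finset.sum_le_sum fun y _ =>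
          Finset.sum_le_sum fun n hn => hstep3 x y n hn
    _ = ∑ x : V, ∑ n ∈ Finset.Icc m N,
          (∑ y : V, ((G.finsetWalkLength n x y).card : ENNReal)) * ENNReal.ofReal (q ^ n) := by
        refine Finset.sum_congr rfl fun x _ => ?_
        rw [Finset.sum_comm]
        exact Finset.sum_congr rfl fun n _ => (Finset.sum_mul _ _ _).symm
    _ ≤ ∑ x : V, ∑ n ∈ Finset.Icc m N,
          ((r ^ n : ℕ) : ENNReal) * ENNReal.ofReal (q ^ n) := by
        refine Finset.sum_le_sum fun x _ => Finset.sum_le_sum fun n _ => ?_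
        gcongr
        exact hcount x n
    _ = ∑ x : V, ∑ n ∈ Finset.Icc m N, ENNReal.ofReal (((r : ℝ) * q) ^ n) := by
        refine Finset.sum_congr rfl fun x _ => Finset.sum_congr rfl fun n _ => ?_
        rw [← ENNReal.ofReal_natCast, ← ENNReal.ofReal_mul (by positivity), mul_pow]
        congr 2
        push_cast
        ring
    _ = ∑ x : V, ENNReal.ofReal (∑ n ∈ Finset.Icc m N, ((r : ℝ) * q) ^ n) := by
        refine Finset.sum_congr rfl fun x _ => ?_
        rw [ENNReal.ofReal_sum_of_nonneg fun n _ => by positivity]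
    _ ≤ ∑ _x : V, ENNReal.ofReal (Real.exp (-(m : ℝ))) :=
        Finset.sum_le_sum fun x _ => ENNReal.ofReal_le_ofReal hgeom
    _ = ENNReal.ofReal ((N : ℝ) * Real.exp (-(m : ℝ))) := by
        rw [Finset.sum_const, nsmul_eq_mul, Finset.card_univ, ← hN,
          ← ENNReal.ofReal_natCast, ← ENNReal.ofReal_mul (by positivity)]
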